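/- If B is a semi-Cohen Boolean algebra and A is a regular subalgebra of B of uniform density, then A is semi-Cohen. -/

import Mathlib

def Subalg {B : Type*} [BooleanAlgebra B] (A : Set B) : Prop :=
  ⊥ ∈ A ∧ ⊤ ∈ A ∧ (∀ x ∈ A, ∀ y ∈ A, x ⊔ y ∈ A) ∧ (∀ x ∈ A, xᶜ ∈ A)

def MaxACIn {B : Type*} [BooleanAlgebra B] (W A : Set B) : Prop :=
  W ⊆ A ∧ ⊥ ∉ W ∧ W.Pairwise (fun x y => x ⊓ y = ⊥) ∧
    ∀ a ∈ A, a ≠ ⊥ → ∃ w ∈ W, a ⊓ w ≠ ⊥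

/-- `X` is a regular subalgebra of `A`: every maximal antichain of `X` is maximal in `A`. -/
def RegIn {B : Type*} [BooleanAlgebra B] (X A : Set B) : Prop :=
  ∀ W : Set B, MaxACIn W X → MaxACIn W A

/-- `C` is a closed unbounded family of countable subsets of `A`. -/
def ClubIn {B : Type*} (A : Set B) (C : Set (Set B)) : Prop :=
  (∀ x ∈ C, x ⊆ A ∧ x.Countable) ∧
  (∀ f : ℕ → Set B, (∀ n, f n ∈ C) → Monotone f → (⋃ n, f n) ∈ C) ∧
  (∀ x : Set B, x ⊆ A → x.Countable → ∃ y ∈ C, x ⊆ y)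

/-- Density below `a` of the subalgebra carried by `A`. -/
noncomputable def densIn {B : Type*} [BooleanAlgebra B] (A : Set B) (a : B) : Cardinal :=
  sInf {c : Cardinal | ∃ D : Set B, D ⊆ A ∧ (∀ d ∈ D, d ≤ a ∧ d ≠ ⊥) ∧
    (∀ b ∈ A, b ≤ a → b ≠ ⊥ → ∃ d ∈ D, d ≤ b) ∧ c = Cardinal.mk ↥D}

/-- The subalgebra carried by `A` has uniform density. -/
def UnifDensIn {B : Type*} [BooleanAlgebra B] (A : Set B) : Prop :=
  ∀ a ∈ A, a ≠ ⊥ → densIn A a = densIn A ⊤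

/-- The subalgebra carried by `A` is semi-Cohen: it has uniform density and a closed
unbounded family of countable regular subalgebras. -/
def SemiCohen {B : Type*} [BooleanAlgebra B] (A : Set B) : Prop :=
  UnifDensIn A ∧ ∃ C : Set (Set B), ClubIn A C ∧ ∀ X ∈ C, Subalg X ∧ RegIn X A

/-! ### Auxiliary machinery -/

/-- A subalgebra is closed under `⊓`. -/
lemma Subalg.inf_mem {B : Type*} [BooleanAlgebra B] {A : Set B} (hA : Subalg A)
    {x y : B} (hx : x ∈ A) (hy : y ∈ A) : x ⊓ y ∈ A := by
  have := hA.2.2.2 _ (hA.2.2.1 _ (hA.2.2.2 _ hx) _ (hA.2.2.2 _ hy))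
  simpa [compl_sup] using this

/-- Pseudo-projection onto a regular subalgebra exists. -/
lemma exists_proj {B : Type*} [BooleanAlgebra B] {A : Set B}
    (hreg : RegIn A Set.univ) (x : B) (hx : x ≠ ⊥) :
    ∃ y, y ∈ A ∧ y ≠ ⊥ ∧ ∀ z ∈ A, z ≠ ⊥ → z ≤ y → z ⊓ x ≠ ⊥ := by
  by_contra hcon
  push_neg at hcon
  have hdense : ∀ y ∈ A, y ≠ ⊥ → ∃ z ∈ A, z ≠ ⊥ ∧ z ≤ y ∧ z ⊓ x = ⊥ := by
    intro y hy hy0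
    obtain ⟨z, hzA, hz0, hzy, hzx⟩ := hcon y hy hy0
    exact ⟨z, hzA, hz0, hzy, hzx⟩
  set Dx : Set B := {z | z ∈ A ∧ z ≠ ⊥ ∧ z ⊓ x = ⊥} with hDx
  set S : Set (Set B) := {W | W ⊆ Dx ∧ W.Pairwise (fun a b => a ⊓ b = ⊥)} with hS
  obtain ⟨m, hm⟩ : ∃ m, Maximal (· ∈ S) m := by
    apply zorn_subset
    intro c hcS hchain
    refine ⟨⋃₀ c, ⟨?_, ?_⟩, fun s hs => Set.subset_sUnion_of_mem hs⟩
    · exact fun z hz => by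
        obtain ⟨t, htc, hzt⟩ := hz; exact (hcS htc).1 hzt
    · intro a ha b hb hab
      obtain ⟨ta, hta, hat⟩ := ha
      obtain ⟨tb, htb, hbt⟩ := hb
      rcases hchain.total hta htb with hsub | hsub
      · exact (hcS htb).2 (hsub hat) hbt hab
      · exact (hcS hta).2 hat (hsub hbt) hab
  have hmax : MaxACIn m A := by
    refine ⟨fun z hz => (hm.1.1 hz).1, fun hmem => (hm.1.1 hmem).2.1 rfl, hm.1.2, ?_⟩
    intro a haA ha0
    by_contra hno
    push_neg at hno
    obtain ⟨z, hzA, hz0, hza, hzx⟩ := hdense a haA ha0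
    have hzm : z ∉ m := by
      intro hzm
      refine hz0 ?_
      calc z = z ⊓ a := (inf_eq_left.2 hza).symm
      _ = a ⊓ z := inf_comm z a
      _ = ⊥ := hno z hzm
    have hins : insert z m ∈ S := by
      constructor
      · intro w hw
        rcases hw with rfl | hw
        · exact ⟨hzA, hz0, hzx⟩
        · exact hm.1.1 hw
      · refine Set.pairwise_insert.2 ⟨hm.1.2, ?_⟩
        intro w hwm _
        have hza' : z ⊓ w = ⊥ := by
          have hle : z ⊓ w ≤ a ⊓ w := inf_le_inf_right w hza
          rw [hno w hwm] at hle
          exact le_bot_iff.1 hle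
        exact ⟨hza', by rwa [inf_comm]⟩
    exact hzm (hm.2 hins (Set.subset_insert z m) (Set.mem_insert z m))
  obtain ⟨w, hwm, hwx⟩ := (hreg m hmax).2.2.2 x (Set.mem_univ x) hx
  have hw0 : w ⊓ x = ⊥ := (hm.1.1 hwm).2.2
  rw [inf_comm] at hw0
  exact hwx hw0

/-- Finitely-based hull operator, defined on finsets by strong recursion. -/
noncomputable def gAux {B : Type*} (E : Set B → Set B) : Finset B → Set B
  | s => E (↑s ∪ ⋃ t ∈ {t : Finset B | t ⊂ s}, gAux E t)
termination_by s => s.card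
decreasing_by exact Finset.card_lt_card (by assumption)

lemma gAux_spec {B : Type*} {C : Set (Set B)} {E : Set B → Set B}
    (hE : ∀ x : Set B, x.Countable → x ⊆ E x ∧ E x ∈ C)
    (hCc : ∀ y ∈ C, y.Countable) :
    ∀ s : Finset B, gAux E s ∈ C ∧ ↑s ∪ (⋃ t ∈ {t : Finset B | t ⊂ s}, gAux E t) ⊆ gAux E s := by
  intro s
  induction s using Finset.strongInduction with
  | _ s ih =>
    have hfin : {t : Finset B | t ⊂ s}.Countable := by
      apply Set.Finite.countable
      apply Set.Finite.subset (s.powerset.finite_toSet)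
      intro t ht
      exact Finset.mem_coe.2 (Finset.mem_powerset.2 ht.subset)
    have hcnt : (↑s ∪ ⋃ t ∈ {t : Finset B | t ⊂ s}, gAux E t).Countable := by
      apply Set.Countable.union (s.finite_toSet.countable)
      exact Set.Countable.biUnion hfin (fun t ht => hCc _ (ih t ht).1)
    rw [gAux]
    exact ⟨(hE _ hcnt).2, (hE _ hcnt).1⟩

lemma gAux_mem {B : Type*} {C : Set (Set B)} {E : Set B → Set B}
    (hE : ∀ x : Set B, x.Countable → x ⊆ E x ∧ E x ∈ C)
    (hCc : ∀ y ∈ C, y.Countable) (s : Finset B) : gAux E s ∈ C :=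
  (gAux_spec hE hCc s).1

lemma subset_gAux {B : Type*} {C : Set (Set B)} {E : Set B → Set B}
    (hE : ∀ x : Set B, x.Countable → x ⊆ E x ∧ E x ∈ C)
    (hCc : ∀ y ∈ C, y.Countable) (s : Finset B) : ↑s ⊆ gAux E s :=
  (Set.union_subset_iff.1 (gAux_spec hE hCc s).2).1

lemma gAux_mono {B : Type*} {C : Set (Set B)} {E : Set B → Set B}
    (hE : ∀ x : Set B, x.Countable → x ⊆ E x ∧ E x ∈ C)
    (hCc : ∀ y ∈ C, y.Countable) {s t : Finset B} (hst : s ⊆ t) :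
    gAux E s ⊆ gAux E t := by
  rcases eq_or_lt_of_le (Finset.le_iff_subset.2 hst) with rfl | hlt
  · exact Set.Subset.rfl
  · calc gAux E s ⊆ ⋃ u ∈ {u : Finset B | u ⊂ t}, gAux E u :=
          Set.subset_biUnion_of_mem (u := fun u => gAux E u) hlt
    _ ⊆ gAux E t := (Set.union_subset_iff.1 (gAux_spec hE hCc t).2).2

/-- The hull of an arbitrary set: union of hulls of its finite subsets. -/
noncomputable def gHull {B : Type*} (E : Set B → Set B) (Y : Set B) : Set B :=
  ⋃ (s : Finset B) (_ : ↑s ⊆ Y), gAux E s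

lemma subset_gHull {B : Type*} {C : Set (Set B)} {E : Set B → Set B}
    (hE : ∀ x : Set B, x.Countable → x ⊆ E x ∧ E x ∈ C)
    (hCc : ∀ y ∈ C, y.Countable) (Y : Set B) : Y ⊆ gHull E Y := by
  intro y hy
  refine Set.mem_iUnion.2 ⟨{y}, Set.mem_iUnion.2 ⟨by simpa using hy, ?_⟩⟩
  exact subset_gAux hE hCc {y} (by simp)

lemma finset_subset_mono_iUnion {B : Type*} {f : ℕ → Set B} (hf : Monotone f)
    (s : Finset B) (hs : ↑s ⊆ ⋃ n, f n) : ∃ n, ↑s ⊆ f n := by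
  classical
  induction s using Finset.induction with
  | empty => exact ⟨0, by simp⟩
  | insert x s hxs ih =>
    have h1 : ↑s ⊆ ⋃ n, f n := fun z hz => hs (by simp [hz])
    obtain ⟨n1, hn1⟩ := ih h1
    have h2 : x ∈ ⋃ n, f n := hs (by simp)
    obtain ⟨n2, hn2⟩ := Set.mem_iUnion.1 h2
    refine ⟨max n1 n2, ?_⟩
    intro z hz
    rcases Finset.mem_insert.1 (by exact_mod_cast hz) with rfl | hz'
    · exact hf (le_max_right n1 n2) hn2
    · exact hf (le_max_left n1 n2) (hn1 hz')

lemma gHull_iUnion {B : Type*} (E : Set B → Set B) {f : ℕ → Set B} (hf : Monotone f) :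
    gHull E (⋃ n, f n) = ⋃ n, gHull E (f n) := by
  apply Set.Subset.antisymm
  · intro x hx
    obtain ⟨s, hs⟩ := Set.mem_iUnion.1 hx
    obtain ⟨hsub, hxs⟩ := Set.mem_iUnion.1 hs
    obtain ⟨n, hn⟩ := finset_subset_mono_iUnion hf s hsub
    exact Set.mem_iUnion.2 ⟨n, Set.mem_iUnion.2 ⟨s, Set.mem_iUnion.2 ⟨hn, hxs⟩⟩⟩
  · refine Set.iUnion_subset (fun n => ?_)
    intro x hx
    obtain ⟨s, hs⟩ := Set.mem_iUnion.1 hx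
    obtain ⟨hsub, hxs⟩ := Set.mem_iUnion.1 hs
    exact Set.mem_iUnion.2 ⟨s, Set.mem_iUnion.2 ⟨hsub.trans (Set.subset_iUnion f n), hxs⟩⟩

lemma gHull_mem {B : Type*} {C : Set (Set B)} {E : Set B → Set B}
    (hE : ∀ x : Set B, x.Countable → x ⊆ E x ∧ E x ∈ C)
    (hCc : ∀ y ∈ C, y.Countable)
    (hCcl : ∀ f : ℕ → Set B, (∀ n, f n ∈ C) → Monotone f → (⋃ n, f n) ∈ C)
    {Y : Set B} (hY : Y.Countable) (hne : Y.Nonempty) : gHull E Y ∈ C := by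
  classical
  obtain ⟨f, rfl⟩ := Set.Countable.exists_eq_range hY hne
  set S : ℕ → Finset B := fun n => (Finset.range (n + 1)).image f with hSdef
  have hSsub : ∀ n, ↑(S n) ⊆ Set.range f := by
    intro n z hz
    simp only [hSdef, Finset.coe_image, Set.mem_image] at hz
    obtain ⟨k, _, rfl⟩ := hz
    exact Set.mem_range_self k
  have hSmono : ∀ {m n : ℕ}, m ≤ n → S m ⊆ S n := by
    intro m n hmn
    exact Finset.image_subset_image (Finset.range_subset_range.2 (by omega))
  have hkey : gHull E (Set.range f) = ⋃ n, gAux E (S n) := by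
    apply Set.Subset.antisymm
    · intro x hx
      obtain ⟨s, hs⟩ := Set.mem_iUnion.1 hx
      obtain ⟨hsub, hxs⟩ := Set.mem_iUnion.1 hs
      -- s is a finite subset of range f, so it is inside some S n
      have : ∃ n, s ⊆ S n := by
        have hr : ↑s ⊆ ⋃ n, (↑(S n) : Set B) := by
          intro z hz
          obtain ⟨k, hk⟩ := hsub hz
          refine Set.mem_iUnion.2 ⟨k, ?_⟩
          simp only [hSdef, Finset.coe_image, Set.mem_image]
          exact ⟨k, by simp, hk⟩
        obtain ⟨n, hn⟩ := finset_subset_mono_iUnion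
          (f := fun n => (↑(S n) : Set B))
          (fun m n hmn => Finset.coe_subset.2 (hSmono hmn)) s hr
        exact ⟨n, Finset.coe_subset.1 hn⟩
      obtain ⟨n, hn⟩ := this
      exact Set.mem_iUnion.2 ⟨n, gAux_mono hE hCc hn hxs⟩
    · refine Set.iUnion_subset (fun n => ?_)
      intro x hx
      exact Set.mem_iUnion.2 ⟨S n, Set.mem_iUnion.2 ⟨hSsub n, hx⟩⟩
  rw [hkey]
  exact hCcl _ (fun n => gAux_mem hE hCc (S n))
    (fun m n hmn => gAux_mono hE hCc (hSmono hmn))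

/-- Theorem 4.1: a regular subalgebra of uniform density of a semi-Cohen algebra is
semi-Cohen. -/
theorem semiCohen_of_regular_subalgebra {B : Type*} [BooleanAlgebra B] (A : Set B)
    (hB : SemiCohen (Set.univ : Set B)) (hA : Subalg A) (hreg : RegIn A Set.univ)
    (hud : UnifDensIn A) : SemiCohen A := by
  classical
  obtain ⟨-, C, ⟨hC1, hC2, hC3⟩, hCreg⟩ := hB
  have hCc : ∀ y ∈ C, y.Countable := fun y hy => (hC1 y hy).2
  -- choose an extension operator into C
  have hEex : ∀ x : Set B, ∃ y, x.Countable → x ⊆ y ∧ y ∈ C := by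
    intro x
    by_cases hx : x.Countable
    · obtain ⟨y, hyC, hxy⟩ := hC3 x (Set.subset_univ x) hx
      exact ⟨y, fun _ => ⟨hxy, hyC⟩⟩
    · exact ⟨∅, fun hc => absurd hc hx⟩
  choose E hE0 using hEex
  have hE : ∀ x : Set B, x.Countable → x ⊆ E x ∧ E x ∈ C := fun x hx => hE0 x hx
  -- choose pseudo-projections onto A
  have hhex : ∀ x : B, ∃ y, x ≠ ⊥ → y ∈ A ∧ y ≠ ⊥ ∧ ∀ z ∈ A, z ≠ ⊥ → z ≤ y → z ⊓ x ≠ ⊥ := by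
    intro x
    by_cases hx : x = ⊥
    · exact ⟨⊥, fun hc => absurd hx hc⟩
    · obtain ⟨y, hy⟩ := exists_proj hreg x hx
      exact ⟨y, fun _ => hy⟩
  choose h hh using hhex
  set G : Set B → Set B := gHull E with hG
  -- the club for A
  set D : Set (Set B) :=
    {Y | Y ⊆ A ∧ Y.Countable ∧ Subalg Y ∧ ∀ x ∈ G Y, x ≠ ⊥ → h x ∈ Y} with hD
  have hGC : ∀ Y : Set B, Y ∈ D → G Y ∈ C := by
    intro Y hY
    exact gHull_mem hE hCc hC2 hY.2.1 ⟨⊥, hY.2.2.1.1⟩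
  -- each member of D is a regular subalgebra of A
  have hDreg : ∀ Y ∈ D, Subalg Y ∧ RegIn Y A := by
    intro Y hY
    refine ⟨hY.2.2.1, ?_⟩
    intro W hW
    -- W is a maximal antichain of G Y
    have hWG : MaxACIn W (G Y) := by
      refine ⟨hW.1.trans (subset_gHull hE hCc Y), hW.2.1, hW.2.2.1, ?_⟩
      intro a haG ha0
      have hha : h a ∈ Y := hY.2.2.2 a haG ha0
      obtain ⟨hhA, hh0, hhmin⟩ := hh a ha0
      obtain ⟨w, hwW, hw0⟩ := hW.2.2.2 (h a) hha hh0
      have hzA : h a ⊓ w ∈ A := hA.inf_mem hhA (hY.1 (hW.1 hwW))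
      have hz0 : h a ⊓ w ≠ ⊥ := hw0
      refine ⟨w, hwW, fun hcon => ?_⟩
      apply hhmin (h a ⊓ w) hzA hz0 inf_le_left
      have hle : h a ⊓ w ⊓ a ≤ a ⊓ w := by
        calc h a ⊓ w ⊓ a ≤ w ⊓ a := inf_le_inf_right a inf_le_right
        _ = a ⊓ w := inf_comm w a
      rw [hcon] at hle
      exact le_bot_iff.1 hle
    -- hence maximal in the whole algebra, hence in A
    have hWU : MaxACIn W Set.univ := (hCreg (G Y) (hGC Y hY)).2 W hWG
    exact ⟨hW.1.trans hY.1, hW.2.1, hW.2.2.1,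
      fun a haA ha0 => hWU.2.2.2 a (Set.mem_univ a) ha0⟩
  refine ⟨hud, D, ⟨?_, ?_, ?_⟩, hDreg⟩
  · exact fun Y hY => ⟨hY.1, hY.2.1⟩
  · -- closure under monotone unions
    intro f hf hmono
    have hmemmax : ∀ {m n : ℕ} {x : B}, x ∈ f m → x ∈ f (max m n) :=
      fun {m n x} hx => hmono (le_max_left m n) hx
    refine ⟨Set.iUnion_subset (fun n => (hf n).1), Set.countable_iUnion (fun n => (hf n).2.1),
      ⟨?_, ?_, ?_, ?_⟩, ?_⟩
    · exact Set.mem_iUnion.2 ⟨0, (hf 0).2.2.1.1⟩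
    · exact Set.mem_iUnion.2 ⟨0, (hf 0).2.2.1.2.1⟩
    · intro x hx y hy
      obtain ⟨m, hm⟩ := Set.mem_iUnion.1 hx
      obtain ⟨n, hn⟩ := Set.mem_iUnion.1 hy
      refine Set.mem_iUnion.2 ⟨max m n, ?_⟩
      exact (hf (max m n)).2.2.1.2.2.1 x (hmono (le_max_left m n) hm) y
        (hmono (le_max_right m n) hn)
    · intro x hx
      obtain ⟨m, hm⟩ := Set.mem_iUnion.1 hx
      exact Set.mem_iUnion.2 ⟨m, (hf m).2.2.1.2.2.2 x hm⟩
    · intro x hx hx0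
      rw [hG, gHull_iUnion E hmono] at hx
      obtain ⟨n, hn⟩ := Set.mem_iUnion.1 hx
      exact Set.mem_iUnion.2 ⟨n, (hf n).2.2.2 x hn hx0⟩
  · -- unboundedness
    intro x₀ hx₀A hx₀c
    set F : ℕ → Set B := fun n => Nat.rec (x₀ ∪ {⊥, ⊤})
      (fun _ Fn => Fn ∪ Set.image2 (· ⊔ ·) Fn Fn ∪ compl '' Fn ∪
        h '' {x ∈ G Fn | x ≠ ⊥}) n with hF
    have hFsucc : ∀ n, F (n + 1) = F n ∪ Set.image2 (· ⊔ ·) (F n) (F n) ∪ compl '' (F n) ∪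
        h '' {x ∈ G (F n) | x ≠ ⊥} := fun n => rfl
    have hFmono : Monotone F := by
      apply monotone_nat_of_le_succ
      intro n
      rw [hFsucc n]
      intro z hz
      exact Or.inl (Or.inl (Or.inl hz))
    have hFbot : ∀ n, ⊥ ∈ F n := fun n =>
      hFmono (Nat.zero_le n) (Or.inr (Set.mem_insert _ _))
    have hFtop : ∀ n, ⊤ ∈ F n := fun n =>
      hFmono (Nat.zero_le n) (Or.inr (Set.mem_insert_of_mem _ rfl))
    have hFA : ∀ n, F n ⊆ A := by
      intro n
      induction n with
      | zero =>
        intro z hz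
        rcases hz with hz | hz
        · exact hx₀A hz
        · rcases hz with rfl | hz
          · exact hA.1
          · rw [Set.mem_singleton_iff] at hz; rw [hz]; exact hA.2.1
      | succ n ih =>
        rw [hFsucc n]
        intro z hz
        rcases hz with ((hz | hz) | hz) | hz
        · exact ih hz
        · obtain ⟨a, ha, b, hb, rfl⟩ := hz
          exact hA.2.2.1 a (ih ha) b (ih hb)
        · obtain ⟨a, ha, rfl⟩ := hz
          exact hA.2.2.2 a (ih ha)
        · obtain ⟨a, ⟨haG, ha0⟩, rfl⟩ := hz
          exact (hh a ha0).1
    have hFc : ∀ n, (F n).Countable := by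
      intro n
      induction n with
      | zero => exact hx₀c.union ((Set.finite_singleton (⊤:B)).insert ⊥).countable
      | succ n ih =>
        rw [hFsucc n]
        have hGFn : (G (F n)).Countable := by
          apply hCc
          apply gHull_mem hE hCc hC2 ih
          exact ⟨⊥, hFbot n⟩
        exact (((ih.union (ih.image2 ih _)).union (ih.image _)).union
          ((hGFn.mono (Set.sep_subset _ _)).image _))
    refine ⟨⋃ n, F n, ⟨Set.iUnion_subset hFA, Set.countable_iUnion hFc, ⟨?_, ?_, ?_, ?_⟩, ?_⟩,
      fun z hz => Set.mem_iUnion.2 ⟨0, Or.inl hz⟩⟩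
    · exact Set.mem_iUnion.2 ⟨0, hFbot 0⟩
    · exact Set.mem_iUnion.2 ⟨0, hFtop 0⟩
    · intro x hx y hy
      obtain ⟨m, hm⟩ := Set.mem_iUnion.1 hx
      obtain ⟨n, hn⟩ := Set.mem_iUnion.1 hy
      refine Set.mem_iUnion.2 ⟨max m n + 1, ?_⟩
      rw [hFsucc]
      exact Or.inl (Or.inl (Or.inr ⟨x, hFmono (le_max_left m n) hm, y,
        hFmono (le_max_right m n) hn, rfl⟩))
    · intro x hx
      obtain ⟨m, hm⟩ := Set.mem_iUnion.1 hx
      refine Set.mem_iUnion.2 ⟨m + 1, ?_⟩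
      rw [hFsucc]
      exact Or.inl (Or.inr ⟨x, hm, rfl⟩)
    · intro x hx hx0
      rw [hG, gHull_iUnion E hFmono] at hx
      obtain ⟨n, hn⟩ := Set.mem_iUnion.1 hx
      refine Set.mem_iUnion.2 ⟨n + 1, ?_⟩
      rw [hFsucc]
      exact Or.inr ⟨x, ⟨hn, hx0⟩, rfl⟩
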